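/- Let g ≥ 1. If B : ℚ^{2g} × ℚ^{2g} → ℚ is a symmetric bilinear form invariant under the integral symplectic group, i.e. B(Mx, My) = B(x, y) for every M ∈ Sp_{2g}(ℤ) (viewed as a rational matrix) and all x, y ∈ ℚ^{2g}, then B = 0. (This is the vanishing Sym²(H_g)^{A_g} = 0 used in the paper, in the case where the arithmetic group A_g is the full integral symplectic group; it follows from Zariski density of Sp_{2g}(ℤ) in Sp_{2g}(ℂ) together with symplectic invariant theory.) -/

import Mathlib

open Matrix

/-- The standard symplectic form matrix `J = [[0, I_g], [-I_g, 0]]` of size `2g × 2g` over `ℤ`. -/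
def symplJInt (g : ℕ) : Matrix (Fin (2 * g)) (Fin (2 * g)) ℤ :=
  fun i j =>
    if (i : ℕ) < g ∧ (j : ℕ) = (i : ℕ) + g then 1
    else if (j : ℕ) < g ∧ (i : ℕ) = (j : ℕ) + g then -1
    else 0

section Aux

variable {g : ℕ}

/-- transpose of a diagonal standard basis matrix -/
theorem stdBasis_diag_transpose {α : Type*} [Zero α] (a : Fin g) (c : α) :
    (Matrix.single a a c)ᵀ = Matrix.single a a c := by
  ext i j
  simp [Matrix.single, and_comm]

end Aux

/-- A symmetric bilinear form on `ℚ^{2g}` invariant under the integral symplectic group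
`Sp_{2g}(ℤ)` (acting via `ℤ ⊆ ℚ`) is zero. -/
theorem sym2_integral_symplectic_invariant_vanishes (g : ℕ) (hg : 1 ≤ g)
    (B : (Fin (2 * g) → ℚ) →ₗ[ℚ] (Fin (2 * g) → ℚ) →ₗ[ℚ] ℚ)
    (hsymm : ∀ x y, B x y = B y x)
    (hinv : ∀ M : Matrix (Fin (2 * g)) (Fin (2 * g)) ℤ,
      Mᵀ * symplJInt g * M = symplJInt g →
      ∀ x y, B ((M.map (Int.cast : ℤ → ℚ)).mulVec x) ((M.map (Int.cast : ℤ → ℚ)).mulVec y)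
        = B x y) :
    B = 0 := by
  classical
  set e : Fin g ⊕ Fin g ≃ Fin (2 * g) :=
    finSumFinEquiv.trans (finCongr (two_mul g).symm) with he
  have hel : ∀ x : Fin g, ((e (Sum.inl x)) : ℕ) = (x : ℕ) := by
    intro x; simp [he]; try omega
  have her : ∀ x : Fin g, ((e (Sum.inr x)) : ℕ) = g + (x : ℕ) := by
    intro x; simp [he]; try omega
  -- J in block form
  have hJ : symplJInt g =
      Matrix.reindex e e
        (Matrix.fromBlocks (0 : Matrix (Fin g) (Fin g) ℤ) 1 (-1) 0) := by
    ext i j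
    obtain ⟨a, rfl⟩ := e.surjective i
    obtain ⟨b, rfl⟩ := e.surjective j
    rw [reindex_apply, submatrix_apply, Equiv.symm_apply_apply, Equiv.symm_apply_apply]
    have hab : ∀ x y : Fin g, ((x : ℕ) = (y : ℕ)) ↔ x = y := fun x y => Fin.val_eq_val x y
    rcases a with a | a <;> rcases b with b | b <;>
      simp only [symplJInt, hel, her, fromBlocks_apply₁₁, fromBlocks_apply₁₂,
        fromBlocks_apply₂₁, fromBlocks_apply₂₂, Matrix.one_apply, Matrix.zero_apply,
        Matrix.neg_apply] <;>
      split_ifs with h1 h2 <;> first | rfl | (exfalso; omega)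
  -- Gram matrix of B
  set C : Matrix (Fin (2 * g)) (Fin (2 * g)) ℚ :=
    fun i j => B (Pi.single i 1) (Pi.single j 1) with hCdef
  have hxdec : ∀ x : Fin (2 * g) → ℚ, ∑ i, x i • (Pi.single i 1 : Fin (2 * g) → ℚ) = x := by
    intro x; funext j
    simp [Finset.sum_apply, Pi.single_apply]
  have hrep : ∀ x y, B x y = ∑ a, ∑ b, x a * y b * C a b := by
    intro x y
    conv_lhs => rw [← hxdec x, ← hxdec y]
    have hCapp : ∀ i j, (B (Pi.single i 1)) (Pi.single j 1) = C i j := fun _ _ => rfl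
    simp only [map_sum, _root_.map_smul, LinearMap.sum_apply, LinearMap.smul_apply,
      smul_eq_mul, hCapp]
    rw [Finset.sum_comm]
    refine Finset.sum_congr rfl fun a _ => ?_
    rw [Finset.mul_sum]
    exact Finset.sum_congr rfl fun b _ => by ring
  have hCsymm : ∀ i j, C i j = C j i := fun i j => hsymm _ _
  have hmat : ∀ M : Matrix (Fin (2 * g)) (Fin (2 * g)) ℤ,
      Mᵀ * symplJInt g * M = symplJInt g →
      (M.map (Int.cast : ℤ → ℚ))ᵀ * C * (M.map (Int.cast : ℤ → ℚ)) = C := by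
    intro M hM
    ext i j
    have h := hinv M hM (Pi.single i 1) (Pi.single j 1)
    rw [hrep, hrep] at h
    simp only [mulVec_single_one, col_apply, mul_one, Pi.single_apply, ite_mul, one_mul, zero_mul,
      mul_ite, mul_zero, Finset.sum_ite_eq', Finset.mem_univ, if_true] at h
    calc ((M.map (Int.cast : ℤ → ℚ))ᵀ * C * (M.map (Int.cast : ℤ → ℚ))) i j
        = ∑ a, ∑ b, (M.map (Int.cast : ℤ → ℚ)) a i * (M.map (Int.cast : ℤ → ℚ)) b j * C a b := by
          simp only [mul_apply, transpose_apply, Finset.sum_mul, Finset.mul_sum]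
          rw [Finset.sum_comm]
          exact Finset.sum_congr rfl fun a _ => Finset.sum_congr rfl fun b _ => by ring
      _ = C i j := h
  -- transfer to block form
  have hsympl : ∀ fb : Matrix (Fin g ⊕ Fin g) (Fin g ⊕ Fin g) ℤ,
      fbᵀ * fromBlocks 0 1 (-1) 0 * fb = fromBlocks 0 1 (-1) 0 →
      (Matrix.reindex e e fb)ᵀ * symplJInt g * Matrix.reindex e e fb = symplJInt g := by
    intro fb h
    rw [hJ, transpose_reindex]
    simp only [reindex_apply, submatrix_mul_equiv]
    rw [h]
  set C' : Matrix (Fin g ⊕ Fin g) (Fin g ⊕ Fin g) ℚ := (Matrix.reindex e e).symm C with hC'def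
  have hCeq : C = Matrix.reindex e e C' := ((Matrix.reindex e e).apply_symm_apply C).symm
  have hC'app : ∀ u v, C' u v = C (e u) (e v) := by
    intro u v
    simp [hC'def, reindex_apply]
  have hblock : ∀ fb : Matrix (Fin g ⊕ Fin g) (Fin g ⊕ Fin g) ℤ,
      fbᵀ * fromBlocks 0 1 (-1) 0 * fb = fromBlocks 0 1 (-1) 0 →
      (fb.map (Int.cast : ℤ → ℚ))ᵀ * C' * fb.map (Int.cast : ℤ → ℚ) = C' := by
    intro fb h
    have h2 := hmat _ (hsympl fb h)
    have hmr : (Matrix.reindex e e fb).map (Int.cast : ℤ → ℚ)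
        = Matrix.reindex e e (fb.map (Int.cast : ℤ → ℚ)) := by
      simp [reindex_apply, submatrix_map]
    rw [hCeq, hmr, transpose_reindex] at h2
    simp only [reindex_apply, submatrix_mul_equiv] at h2
    rw [← reindex_apply, ← reindex_apply] at h2
    exact (Matrix.reindex e e).injective h2
  set P := C'.toBlocks₁₁ with hPdef
  set Q := C'.toBlocks₁₂ with hQdef
  set Q2 := C'.toBlocks₂₁ with hQ2def
  set R := C'.toBlocks₂₂ with hRdef
  have hC'b : C' = fromBlocks P Q Q2 R := (fromBlocks_toBlocks C').symm
  have hQ2 : ∀ x y, Q2 x y = Q y x := by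
    intro x y
    have h1 : Q2 x y = C' (Sum.inr x) (Sum.inl y) := rfl
    have h2 : Q y x = C' (Sum.inl y) (Sum.inr x) := rfl
    rw [h1, h2, hC'app, hC'app]
    exact hCsymm _ _
  have hmapJ : (fromBlocks (0 : Matrix (Fin g) (Fin g) ℤ) 1 (-1) 0).map (Int.cast : ℤ → ℚ)
      = (fromBlocks 0 1 (-1) 0 : Matrix (Fin g ⊕ Fin g) (Fin g ⊕ Fin g) ℚ) := by
    ext (i | i) (j | j) <;> simp [Matrix.one_apply, apply_ite]
  have hmapU : ∀ a : Fin g,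
      (fromBlocks (1 : Matrix (Fin g) (Fin g) ℤ) (Matrix.single a a 1) 0 1).map
          (Int.cast : ℤ → ℚ)
        = (fromBlocks 1 (Matrix.single a a 1) 0 1
            : Matrix (Fin g ⊕ Fin g) (Fin g ⊕ Fin g) ℚ) := by
    intro a
    ext (i | i) (j | j) <;> simp [Matrix.one_apply, Matrix.single, apply_ite]
  have hJs : (fromBlocks 0 1 (-1) 0 : Matrix (Fin g ⊕ Fin g) (Fin g ⊕ Fin g) ℤ)ᵀ *
      (fromBlocks 0 1 (-1) 0 : Matrix (Fin g ⊕ Fin g) (Fin g ⊕ Fin g) ℤ) *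
      (fromBlocks 0 1 (-1) 0 : Matrix (Fin g ⊕ Fin g) (Fin g ⊕ Fin g) ℤ)
      = (fromBlocks 0 1 (-1) 0 : Matrix (Fin g ⊕ Fin g) (Fin g ⊕ Fin g) ℤ) := by
    simp [fromBlocks_transpose, fromBlocks_multiply]
  have hUs : ∀ a : Fin g,
      (fromBlocks 1 (Matrix.single a a 1) 0 1
          : Matrix (Fin g ⊕ Fin g) (Fin g ⊕ Fin g) ℤ)ᵀ *
        (fromBlocks 0 1 (-1) 0 : Matrix (Fin g ⊕ Fin g) (Fin g ⊕ Fin g) ℤ) *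
        (fromBlocks 1 (Matrix.single a a 1) 0 1
          : Matrix (Fin g ⊕ Fin g) (Fin g ⊕ Fin g) ℤ)
      = (fromBlocks 0 1 (-1) 0 : Matrix (Fin g ⊕ Fin g) (Fin g ⊕ Fin g) ℤ) := by
    intro a
    simp [fromBlocks_transpose, fromBlocks_multiply, stdBasis_diag_transpose]
  have hJeq := hblock _ hJs
  rw [hmapJ] at hJeq
  rw [hC'b, fromBlocks_transpose, fromBlocks_multiply, fromBlocks_multiply] at hJeq
  simp only [Matrix.mul_zero, Matrix.zero_mul, Matrix.mul_one, Matrix.one_mul, Matrix.mul_neg,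
    Matrix.neg_mul, zero_add, add_zero, neg_neg, transpose_zero, transpose_one,
    transpose_neg] at hJeq
  have hRP : R = P := (fromBlocks_inj.mp hJeq).1
  have hUeq : ∀ a : Fin g,
      P * Matrix.single a a (1 : ℚ) = 0 ∧
        Matrix.single a a (1 : ℚ) * Q + Q2 * Matrix.single a a (1 : ℚ) = 0 := by
    intro a
    have h := hblock _ (hUs a)
    rw [hmapU a] at h
    rw [hC'b, fromBlocks_transpose, fromBlocks_multiply, fromBlocks_multiply] at h
    simp only [transpose_one, transpose_zero, stdBasis_diag_transpose, Matrix.mul_zero,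
      Matrix.zero_mul, Matrix.mul_one, Matrix.one_mul, zero_add, add_zero] at h
    obtain ⟨h11, h12, h21, h22⟩ := fromBlocks_inj.mp h
    rw [h21] at h22
    constructor
    · rwa [add_eq_right] at h12
    · rw [add_comm]
      rwa [← add_assoc, add_eq_right] at h22
  have hP : P = 0 := by
    ext i j
    have h := (hUeq j).1
    have h2 : (P * Matrix.single j j (1 : ℚ)) i j = (0 : Matrix (Fin g) (Fin g) ℚ) i j := by
      rw [h]
    simpa using h2
  have hQ : Q = 0 := by
    ext i j
    have h := (hUeq i).2
    have h2 : (Matrix.single i i (1 : ℚ) * Q + Q2 * Matrix.single i i 1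
          : Matrix (Fin g) (Fin g) ℚ) i j
        = (0 : Matrix (Fin g) (Fin g) ℚ) i j := by rw [h]
    by_cases hji : j = i
    · subst hji
      simp only [Matrix.add_apply, Matrix.zero_apply, single_mul_apply_same,
        mul_single_apply_same, one_mul, mul_one] at h2
      rw [hQ2 j j] at h2
      have : Q j j = 0 := by linarith
      simpa using this
    · simp only [Matrix.add_apply, Matrix.zero_apply, single_mul_apply_same,
        one_mul] at h2
      rw [mul_single_apply_of_ne _ _ _ _ _ hji] at h2
      simpa using h2
  have hQ2z : Q2 = 0 := by
    ext x y
    rw [hQ2 x y, hQ]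
    simp
  have hR : R = 0 := by rw [hRP, hP]
  have hC0 : C = 0 := by
    rw [hCeq, hC'b, hP, hQ, hQ2z, hR]
    have hz : (fromBlocks 0 0 0 0 : Matrix (Fin g ⊕ Fin g) (Fin g ⊕ Fin g) ℚ) = 0 := by
      ext (i | i) (j | j) <;> simp
    rw [hz]
    simp [reindex_apply]
  refine LinearMap.ext fun x => LinearMap.ext fun y => ?_
  rw [show (B x) y = _ from hrep x y]
  simp [hC0]
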